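/- Let $z:(x_1,x_2)\to(0,\infty)$ be a maximal solution of $z''/(1+z'^2) = -2/z$ attaining a maximum $z_0$ at an interior point. Then the interval $(x_1,x_2)$ is bounded and $z(x)\to 0$ as $x \to x_1^+$ and as $x \to x_2^-$, with $|z'(x)| \to \infty$ at both endpoints (the graph meets the $x$-axis orthogonally). -/

import Mathlib

open Set Filter

/-- `z` is a positive solution of `z''/(1+z'^2) = -2/z` on the open order-connected set `s`. -/
def IsSolOn (s : Set ℝ) (z : ℝ → ℝ) : Prop :=
  IsOpen s ∧ s.OrdConnected ∧
  (∀ x ∈ s, 0 < z x) ∧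
  (∀ x ∈ s, DifferentiableAt ℝ z x) ∧
  (∀ x ∈ s, DifferentiableAt ℝ (deriv z) x) ∧
  (∀ x ∈ s, deriv (deriv z) x / (1 + (deriv z x) ^ 2) = -2 / z x)

/-- A maximal solution: it admits no extension to a strictly larger open interval. -/
def IsMaxSolOn (s : Set ℝ) (z : ℝ → ℝ) : Prop :=
  IsSolOn s z ∧ ∀ t : Set ℝ, ∀ w : ℝ → ℝ, IsSolOn t w → s ⊆ t → Set.EqOn w z s → t = s

open Topology

lemma SolAux.ode' {s : Set ℝ} {z : ℝ → ℝ} (h : IsSolOn s z) {x : ℝ} (hx : x ∈ s) :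
    deriv (deriv z) x = -2 * (1 + (deriv z x) ^ 2) / z x := by
  obtain ⟨-, -, hpos, -, -, hode⟩ := h
  have hb : (0:ℝ) < 1 + (deriv z x)^2 := by positivity
  have h1 := hode x hx
  rw [div_eq_iff hb.ne'] at h1
  rw [h1, div_mul_eq_mul_div]

lemma SolAux.solOn_neg {s : Set ℝ} {z : ℝ → ℝ} (h : IsSolOn s z) :
    IsSolOn (Neg.neg ⁻¹' s) (z ∘ Neg.neg) := by
  obtain ⟨hopen, hord, hpos, hd1, hd2, hode⟩ := h
  have key : ∀ x : ℝ, -x ∈ s → HasDerivAt (z ∘ Neg.neg) (-(deriv z (-x))) x := fun x hx => by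
    simpa using ((hd1 _ hx).hasDerivAt.comp x (hasDerivAt_neg x))
  have hder : ∀ x : ℝ, -x ∈ s → deriv (z ∘ Neg.neg) x = -(deriv z (-x)) := fun x hx =>
    (key x hx).deriv
  have hordn : (Neg.neg ⁻¹' s : Set ℝ).OrdConnected := by
    constructor
    intro a ha b hb c hc
    exact hord.out hb ha ⟨neg_le_neg hc.2, neg_le_neg hc.1⟩
  refine ⟨hopen.preimage continuous_neg, hordn, fun x hx => hpos _ hx,
    fun x hx => (key x hx).differentiableAt, fun x hx => ?_, fun x hx => ?_⟩ <;>
  · have hs' : ∀ᶠ y in 𝓝 x, -y ∈ s := (hopen.preimage continuous_neg).mem_nhds hx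
    have heq : deriv (z ∘ Neg.neg) =ᶠ[𝓝 x] fun y => -(deriv z (-y)) :=
      hs'.mono fun y hy => hder y hy
    have hd2' : HasDerivAt (fun y => -(deriv z (-y))) (deriv (deriv z) (-x)) x := by
      have h := (((hd2 _ hx).hasDerivAt.comp x (hasDerivAt_neg x)).neg)
      simp only [mul_neg, mul_one, neg_neg] at h
      exact h
    first
    | exact (heq.differentiableAt_iff).2 hd2'.differentiableAt
    | · rw [heq.deriv_eq, hd2'.deriv, hder x hx]
        show deriv (deriv z) (-x) / (1 + (-(deriv z (-x))) ^ 2) = -2 / z (-x)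
        rw [neg_sq]
        exact hode _ hx

lemma SolAux.maxSolOn_neg {s : Set ℝ} {z : ℝ → ℝ} (h : IsMaxSolOn s z) :
    IsMaxSolOn (Neg.neg ⁻¹' s) (z ∘ Neg.neg) := by
  refine ⟨SolAux.solOn_neg h.1, fun t w hw hsub heq => ?_⟩
  have h2 := h.2 (Neg.neg ⁻¹' t) (w ∘ Neg.neg) (SolAux.solOn_neg hw)
    (fun x hx => hsub (show -x ∈ Neg.neg ⁻¹' s by simpa using hx))
    (fun x hx => by
      have := heq (show -x ∈ Neg.neg ⁻¹' s by simpa using hx)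
      simpa using this)
  have h3 : Neg.neg ⁻¹' (Neg.neg ⁻¹' t) = t := by ext y; simp
  rw [← h3, h2]

lemma SolAux.main_right {s : Set ℝ} {z : ℝ → ℝ} (hz : IsMaxSolOn s z)
    {z0 x0 : ℝ} (hx0 : x0 ∈ s) (hval : z x0 = z0) (hmax : ∀ x ∈ s, z x ≤ z0) :
    ∃ x1 x2 : ℝ, x1 < x2 ∧ s = Ioo x1 x2 ∧
      Tendsto z (𝓝[<] x2) (𝓝 0) ∧ Tendsto (fun x => |deriv z x|) (𝓝[<] x2) atTop := by
  obtain ⟨⟨hopen, hord, hpos, hd1, hd2, hode⟩, hmaxsol⟩ := hz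
  have hode' : ∀ x ∈ s, deriv (deriv z) x = -2 * (1 + (deriv z x) ^ 2) / z x := by
    intro x hx
    have hb : (0:ℝ) < 1 + (deriv z x)^2 := by positivity
    have h1 := hode x hx
    rw [div_eq_iff hb.ne'] at h1
    rw [h1, div_mul_eq_mul_div]
  have hz0 : 0 < z0 := hval ▸ hpos x0 hx0
  have hconv : Convex ℝ s := hord.convex
  -- first derivative zero at x0
  have hd0 : deriv z x0 = 0 := by
    apply IsLocalMax.deriv_eq_zero
    filter_upwards [hopen.mem_nhds hx0] with y hy
    calc z y ≤ z0 := hmax y hy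
    _ = z x0 := hval.symm
  -- first integral
  have hE : ∀ x ∈ s, (1 + (deriv z x) ^ 2) * (z x) ^ 4 = z0 ^ 4 := by
    set E : ℝ → ℝ := fun x => (1 + (deriv z x) ^ 2) * (z x) ^ 4 with hEdef
    have hEd : ∀ x ∈ s, HasDerivAt E 0 x := by
      intro x hx
      have h1 : HasDerivAt z (deriv z x) x := (hd1 x hx).hasDerivAt
      have h2 : HasDerivAt (deriv z) (deriv (deriv z) x) x := (hd2 x hx).hasDerivAt
      have h3 : HasDerivAt E ((2 * deriv z x * deriv (deriv z) x) * (z x) ^ 4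
          + (1 + (deriv z x) ^ 2) * (4 * (z x) ^ 3 * deriv z x)) x := by
        have ha : HasDerivAt (fun y => 1 + (deriv z y) ^ 2)
            (2 * deriv z x * deriv (deriv z) x) x := by
          have := ((h2.pow 2).const_add 1)
          simpa [mul_comm, mul_assoc, mul_left_comm] using this
        have hb : HasDerivAt (fun y => (z y) ^ 4) (4 * (z x) ^ 3 * deriv z x) x := by
          have hb' := h1.pow 4
          norm_num at hb'
          exact hb'
        exact ha.mul hb
      convert h3 using 1
      rw [hode' x hx]
      field_simp [(hpos x hx).ne']
      ring
    have hcst : ∀ x ∈ s, E x = E x0 := by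
      intro x hx
      apply Convex.is_const_of_fderivWithin_eq_zero hconv
        (fun y hy => ((hEd y hy).differentiableAt).differentiableWithinAt) _ hx hx0
      intro y hy
      rw [fderivWithin_of_isOpen hopen hy]
      rw [(hEd y hy).hasFDerivAt.fderiv]
      exact ContinuousLinearMap.ext fun u => by simp
    intro x hx
    have := hcst x hx
    rw [hEdef] at this
    simp only at this
    rw [this, hd0, hval]
    norm_num
  -- second derivative bound
  have hz'' : ∀ x ∈ s, deriv (deriv z) x ≤ -2 / z0 := by
    intro x hx
    rw [hode' x hx, div_le_div_iff₀ (hpos x hx) hz0]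
    nlinarith [sq_nonneg (deriv z x), hpos x hx, hmax x hx]
  -- g := z' + 2/z0 * (x - x0) is antitone on s
  set g : ℝ → ℝ := fun x => deriv z x + 2 / z0 * (x - x0) with hgdef
  have hgd : ∀ x ∈ s, HasDerivAt g (deriv (deriv z) x + 2 / z0) x := by
    intro x hx
    have h2 : HasDerivAt (deriv z) (deriv (deriv z) x) x := (hd2 x hx).hasDerivAt
    have h3 : HasDerivAt (fun y => 2 / z0 * (y - x0)) (2 / z0) x := by
      simpa using (((hasDerivAt_id x).sub_const x0).const_mul (2 / z0))
    exact h2.add h3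
  have hganti : AntitoneOn g s := by
    apply antitoneOn_of_deriv_nonpos hconv
    · intro x hx
      exact ((hgd x hx).differentiableAt).continuousAt.continuousWithinAt
    · intro x hx
      rw [hopen.interior_eq] at hx
      exact ((hgd x hx).differentiableAt).differentiableWithinAt
    · intro x hx
      rw [hopen.interior_eq] at hx
      rw [(hgd x hx).deriv]
      have := hz'' x hx
      have h5 : (-2:ℝ) / z0 = -(2 / z0) := by ring
      linarith [h5 ▸ this]
  have hg0 : g x0 = 0 := by simp [hgdef, hd0]
  -- slope bounds from antitonicity of g
  have hslope : ∀ x ∈ s, x0 ≤ x → deriv z x ≤ -(2 / z0) * (x - x0) := by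
    intro x hx hxx
    have := hganti hx0 hx hxx
    rw [hg0] at this
    have : deriv z x + 2 / z0 * (x - x0) ≤ 0 := this
    linarith
  have hslope' : ∀ x ∈ s, x ≤ x0 → -(2 / z0) * (x - x0) ≤ deriv z x := by
    intro x hx hxx
    have := hganti hx hx0 hxx
    rw [hg0] at this
    have : 0 ≤ deriv z x + 2 / z0 * (x - x0) := this
    linarith
  -- quadratic bound : z x + (x-x0)^2/z0 ≤ z0 on s
  have hquad : ∀ x ∈ s, z x + (x - x0) ^ 2 / z0 ≤ z0 := by
    set h : ℝ → ℝ := fun x => z x + (x - x0) ^ 2 / z0 with hhdef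
    have hhd : ∀ x ∈ s, HasDerivAt h (deriv z x + 2 / z0 * (x - x0)) x := by
      intro x hx
      have h1 : HasDerivAt z (deriv z x) x := (hd1 x hx).hasDerivAt
      have h2 : HasDerivAt (fun y => (y - x0) ^ 2 / z0) (2 / z0 * (x - x0)) x := by
        have h3 : HasDerivAt (fun y => (y - x0) ^ 2) (2 * (x - x0)) x := by
          have := ((hasDerivAt_id x).sub_const x0).pow 2
          norm_num at this
          exact this
        have := h3.div_const z0
        rw [show 2 / z0 * (x - x0) = 2 * (x - x0) / z0 by ring]
        exact this
      exact h1.add h2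
    have hhx0 : h x0 = z0 := by simp [hhdef, hval]
    intro x hx
    rcases le_total x x0 with hle | hle
    · -- monotone on s ∩ Iic x0
      have hmono : MonotoneOn h (s ∩ Iic x0) := by
        apply monotoneOn_of_deriv_nonneg (hconv.inter (convex_Iic x0))
        · intro y hy
          exact ((hhd y hy.1).differentiableAt).continuousAt.continuousWithinAt
        · intro y hy
          rw [interior_inter, hopen.interior_eq, interior_Iic] at hy
          exact ((hhd y hy.1).differentiableAt).differentiableWithinAt
        · intro y hy
          rw [interior_inter, hopen.interior_eq, interior_Iic] at hy
          rw [(hhd y hy.1).deriv]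
          have := hslope' y hy.1 hy.2.le
          linarith
      have := hmono ⟨hx, hle⟩ ⟨hx0, le_refl x0⟩ hle
      rw [hhx0] at this
      exact this
    · have hanti : AntitoneOn h (s ∩ Ici x0) := by
        apply antitoneOn_of_deriv_nonpos (hconv.inter (convex_Ici x0))
        · intro y hy
          exact ((hhd y hy.1).differentiableAt).continuousAt.continuousWithinAt
        · intro y hy
          rw [interior_inter, hopen.interior_eq, interior_Ici] at hy
          exact ((hhd y hy.1).differentiableAt).differentiableWithinAt
        · intro y hy
          rw [interior_inter, hopen.interior_eq, interior_Ici] at hy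
          rw [(hhd y hy.1).deriv]
          have := hslope y hy.1 hy.2.le
          linarith
      have := hanti ⟨hx0, le_refl x0⟩ ⟨hx, hle⟩ hle
      rw [hhx0] at this
      exact this
  -- s is bounded
  have hbdd : ∀ x ∈ s, |x - x0| < z0 := by
    intro x hx
    have h1 := hquad x hx
    have h2 := hpos x hx
    have h3 : (x - x0) ^ 2 < z0 ^ 2 := by
      have h4 : (x - x0) ^ 2 / z0 ≤ z0 - z x := by linarith
      rw [div_le_iff₀ hz0] at h4
      nlinarith
    have h5 : |x - x0| ^ 2 < z0 ^ 2 := by rwa [sq_abs]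
    exact lt_of_pow_lt_pow_left₀ 2 hz0.le h5
  -- s is an interval
  have hsne : s.Nonempty := ⟨x0, hx0⟩
  have hbddA : BddAbove s := ⟨x0 + z0, fun x hx => by
    have := abs_lt.1 (hbdd x hx); linarith [this.2]⟩
  have hbddB : BddBelow s := ⟨x0 - z0, fun x hx => by
    have := abs_lt.1 (hbdd x hx); linarith [this.1]⟩
  set x1 : ℝ := sInf s with hx1def
  set x2 : ℝ := sSup s with hx2def
  have hnotmem : x2 ∉ s := by
    intro hmem
    obtain ⟨δ, hδ, hball⟩ := Metric.isOpen_iff.1 hopen x2 hmem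
    have h6 : x2 + δ / 2 ∈ s := hball (by
      have hd : dist (x2 + δ / 2) x2 = δ / 2 := by
        rw [Real.dist_eq, show x2 + δ / 2 - x2 = δ / 2 by ring]
        exact abs_of_pos (by linarith)
      rw [Metric.mem_ball, hd]; linarith)
    have := le_csSup hbddA h6
    linarith
  have hnotmem' : x1 ∉ s := by
    intro hmem
    obtain ⟨δ, hδ, hball⟩ := Metric.isOpen_iff.1 hopen x1 hmem
    have h6 : x1 - δ / 2 ∈ s := hball (by
      have hd : dist (x1 - δ / 2) x1 = δ / 2 := by
        rw [Real.dist_eq, show x1 - δ / 2 - x1 = -(δ / 2) by ring, abs_neg]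
        exact abs_of_pos (by linarith)
      rw [Metric.mem_ball, hd]; linarith)
    have := csInf_le hbddB h6
    linarith
  have hseq : s = Ioo x1 x2 := by
    apply Subset.antisymm
    · intro x hx
      refine ⟨lt_of_le_of_ne (csInf_le hbddB hx) ?_, lt_of_le_of_ne (le_csSup hbddA hx) ?_⟩
      · intro h; exact hnotmem' (h ▸ hx)
      · intro h; exact hnotmem (h ▸ hx)
    · rintro x ⟨h1x, h2x⟩
      obtain ⟨a, ha, hax⟩ := exists_lt_of_csInf_lt hsne h1x
      obtain ⟨b, hb, hxb⟩ := exists_lt_of_lt_csSup hsne h2x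
      exact hord.out ha hb ⟨hax.le, hxb.le⟩
  have hx1x2 : x1 < x2 := by
    have := hseq ▸ hx0
    exact lt_trans this.1 this.2
  have hx0mem : x0 ∈ Ioo x1 x2 := hseq ▸ hx0
  -- limit at the right endpoint
  have hIoosub : Ioo x0 x2 ⊆ s := by
    rw [hseq]; exact Ioo_subset_Ioo_left hx0mem.1.le
  have hderivneg : ∀ x ∈ Ioo x0 x2, deriv z x < 0 := by
    intro x hx
    have h1 := hslope x (hIoosub hx) hx.1.le
    have h2 : 0 < 2 / z0 := by positivity
    nlinarith [hx.1]
  have hzanti : AntitoneOn z (Ioo x0 x2) := by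
    apply antitoneOn_of_deriv_nonpos (convex_Ioo x0 x2)
    · intro y hy
      exact ((hd1 y (hIoosub hy)).continuousAt).continuousWithinAt
    · intro y hy
      rw [interior_Ioo] at hy
      exact (hd1 y (hIoosub hy)).differentiableWithinAt
    · intro y hy
      rw [interior_Ioo] at hy
      exact (hderivneg y hy).le
  have hIoone : (Ioo x0 x2).Nonempty := nonempty_Ioo.2 hx0mem.2
  have hbddb : BddBelow (z '' Ioo x0 x2) := by
    refine ⟨0, ?_⟩
    rintro y ⟨x, hx, rfl⟩
    exact (hpos x (hIoosub hx)).le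
  set L : ℝ := sInf (z '' Ioo x0 x2) with hLdef
  have hLtend : Tendsto z (𝓝[<] x2) (𝓝 L) :=
    hzanti.tendsto_nhdsWithin_Ioo_left hIoone hbddb
  have hL0 : 0 ≤ L := le_csInf (hIoone.image z) (by rintro y ⟨x, hx, rfl⟩; exact (hpos x (hIoosub hx)).le)
  have hLle : ∀ x ∈ Ioo x0 x2, L ≤ z x := fun x hx => csInf_le hbddb ⟨x, hx, rfl⟩
  -- derivative formula
  have hsq : ∀ x ∈ s, (deriv z x) ^ 2 = z0 ^ 4 / (z x) ^ 4 - 1 := by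
    intro x hx
    have hz4 : (z x) ^ 4 ≠ 0 := pow_ne_zero 4 (hpos x hx).ne'
    have h7 : (deriv z x) ^ 2 + 1 = z0 ^ 4 / (z x) ^ 4 := by
      rw [eq_div_iff hz4]; linarith [hE x hx]
    linarith
  have hformula : ∀ x ∈ Ioo x0 x2, deriv z x = -Real.sqrt (z0 ^ 4 / (z x) ^ 4 - 1) := by
    intro x hx
    have h1 : Real.sqrt ((deriv z x) ^ 2) = -deriv z x := by
      rw [Real.sqrt_sq_eq_abs]; exact abs_of_neg (hderivneg x hx)
    rw [hsq x (hIoosub hx)] at h1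
    linarith
  -- the endpoint limit is zero
  have hL0' : L = 0 := by
    by_contra hne
    have hLpos : 0 < L := lt_of_le_of_ne hL0 (Ne.symm hne)
    have hIoomem : Ioo x0 x2 ∈ 𝓝[<] x2 := Ioo_mem_nhdsLT_of_mem ⟨hx0mem.2, le_rfl⟩
    set m : ℝ := -Real.sqrt (z0 ^ 4 / L ^ 4 - 1) with hmdef
    have hmt : Tendsto (deriv z) (𝓝[<] x2) (𝓝 m) := by
      have hcont : ContinuousAt (fun y : ℝ => -Real.sqrt (z0 ^ 4 / y ^ 4 - 1)) L := by
        apply ContinuousAt.neg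
        apply Real.continuous_sqrt.continuousAt.comp
        exact ContinuousAt.sub
          (continuousAt_const.div ((continuous_pow 4).continuousAt) (by positivity))
          continuousAt_const
      apply Tendsto.congr' ?_ (hcont.tendsto.comp hLtend)
      filter_upwards [hIoomem] with x hx
      exact (hformula x hx).symm
    have hZt : Tendsto (fun x => (z x, deriv z x)) (𝓝[<] x2) (𝓝 (L, m)) :=
      hLtend.prodMk_nhds hmt
    set F : ℝ × ℝ → ℝ × ℝ := fun p => (p.2, -2 * (1 + p.2 ^ 2) / p.1) with hFdef
    have hFc : ContDiffAt ℝ 1 F (L, m) := by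
      apply ContDiffAt.prodMk
      · exact contDiffAt_snd
      · apply ContDiffAt.div
        · exact (contDiffAt_const.mul ((contDiffAt_const.add (contDiffAt_snd.pow 2))))
        · exact contDiffAt_fst
        · exact hLpos.ne'
    obtain ⟨g, hgp, ε₀, hε₀, hgode⟩ := ContDiffAt.exists_forall_mem_closedBall_exists_eq_forall_mem_Ioo_hasDerivAt₀ hFc x2
    have hgx2mem : x2 ∈ Ioo (x2 - ε₀) (x2 + ε₀) := by constructor <;> linarith
    have hgcont : ContinuousAt g x2 := (hgode x2 hgx2mem).continuousAt
    have hgt : Tendsto g (𝓝 x2) (𝓝 (L, m)) := hgp ▸ hgcont.tendsto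
    have hg1pos : ∀ᶠ t in 𝓝 x2, 0 < (g t).1 := by
      have h1 : Tendsto (fun t => (g t).1) (𝓝 x2) (𝓝 L) :=
        (continuousAt_fst.tendsto.comp hgt)
      exact h1.eventually (eventually_gt_nhds hLpos)
    obtain ⟨ε₁, hε₁, hball⟩ := Metric.eventually_nhds_iff_ball.mp hg1pos
    set ε : ℝ := min ε₀ (min ε₁ (x2 - x0)) / 2 with hεdef
    have hεpos : 0 < ε := by
      have : 0 < x2 - x0 := by linarith [hx0mem.2]
      positivity
    have hεε₀ : ε < ε₀ := by
      have h1 : min ε₀ (min ε₁ (x2 - x0)) ≤ ε₀ := min_le_left _ _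
      simp only [hεdef]; linarith
    have hεε₁ : 2 * ε ≤ ε₁ := by
      have h1 : min ε₀ (min ε₁ (x2 - x0)) ≤ ε₁ := le_trans (min_le_right _ _) (min_le_left _ _)
      simp only [hεdef]; linarith
    have hεx0 : ε < x2 - x0 := by
      have h1 : min ε₀ (min ε₁ (x2 - x0)) ≤ x2 - x0 := le_trans (min_le_right _ _) (min_le_right _ _)
      have : 0 < x2 - x0 := by linarith [hx0mem.2]
      simp only [hεdef]; linarith
    have hgpos : ∀ t ∈ Ioo (x2 - ε) (x2 + ε), 0 < (g t).1 := by
      intro t ht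
      apply hball
      rw [Metric.mem_ball, Real.dist_eq, abs_lt]
      constructor <;> [linarith [ht.1]; linarith [ht.2]]
    -- Lipschitz neighbourhood
    obtain ⟨K, U, hU, hlip⟩ := hFc.exists_lipschitzOnWith
    have hLmU : (L, m) ∈ U := mem_of_mem_nhds hU
    -- pick a point a close to x2
    have hev : ∀ᶠ t in 𝓝[<] x2, ((z t, deriv z t) ∈ U ∧ g t ∈ U) ∧ t ∈ Ioo x0 x2 ∧ x2 - ε / 2 < t := by
      have e1 : ∀ᶠ t in 𝓝[<] x2, (z t, deriv z t) ∈ U := hZt.eventually_mem hU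
      have e2 : ∀ᶠ t in 𝓝[<] x2, g t ∈ U := (hgt.eventually_mem hU).filter_mono nhdsWithin_le_nhds
      have e3 : ∀ᶠ t in 𝓝[<] x2, t ∈ Ioo x0 x2 := hIoomem
      have e4 : ∀ᶠ t in 𝓝[<] x2, x2 - ε / 2 < t := by
        have h9 : Ioo (x2 - ε/2) x2 ∈ 𝓝[<] x2 := Ioo_mem_nhdsLT_of_mem ⟨by linarith, le_rfl⟩
        filter_upwards [h9] with t ht using ht.1
      exact (e1.and e2).and (e3.and e4)
    obtain ⟨a0, ha0lt, hsub0⟩ := mem_nhdsLT_iff_exists_Ioo_subset.1 hev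
    set a : ℝ := max a0 (x2 - ε / 2) with hadef
    have halt : a < x2 := by
      apply max_lt ha0lt
      linarith
    have haprop : ∀ t, a < t → t < x2 →
        ((z t, deriv z t) ∈ U ∧ g t ∈ U) ∧ t ∈ Ioo x0 x2 ∧ x2 - ε / 2 < t := by
      intro t h1 h2
      exact hsub0 ⟨lt_of_le_of_lt (le_max_left _ _) h1, h2⟩
    have hax0 : x0 < a := by
      have : x2 - ε / 2 ≤ a := le_max_right _ _
      linarith
    have hamem : a ∈ Ioo x0 x2 := ⟨hax0, halt⟩
    have haε : x2 - ε < a := by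
      have : x2 - ε / 2 ≤ a := le_max_right _ _
      linarith
    have haε₀ : x2 - ε₀ < a := by linarith
    -- the combined trajectory
    set Z : ℝ → ℝ × ℝ := fun x => if x < x2 then (z x, deriv z x) else (L, m) with hZdef
    have hZx2val : Z x2 = (L, m) := if_neg (lt_irrefl x2)
    have hZval : ∀ t, t < x2 → Z t = (z t, deriv z t) := fun t ht => if_pos ht
    have hZtend : Tendsto Z (𝓝[<] x2) (𝓝 (L, m)) := by
      apply Tendsto.congr' ?_ hZt
      filter_upwards [self_mem_nhdsWithin] with t ht
      exact (hZval t ht).symm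
    have hpairD : ∀ t ∈ s, t < x2 → HasDerivAt Z (F (Z t)) t := by
      intro t ht htlt
      have h1 : HasDerivAt (fun x => (z x, deriv z x)) (deriv z t, deriv (deriv z) t) t :=
        ((hd1 t ht).hasDerivAt).prodMk ((hd2 t ht).hasDerivAt)
      have heqn : Z =ᶠ[𝓝 t] fun x => (z x, deriv z x) := by
        filter_upwards [Iio_mem_nhds htlt] with y hy
        exact hZval y hy
      have h2 : HasDerivAt Z (deriv z t, deriv (deriv z) t) t :=
        h1.congr_of_eventuallyEq heqn
      have h3 : F (Z t) = (deriv z t, deriv (deriv z) t) := by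
        rw [hZval t htlt, hFdef]
        simp only
        rw [hode' t ht]
      rw [h3]
      exact h2
    have hIcos : ∀ t, a ≤ t → t < x2 → t ∈ s := fun t h1 h2 =>
      hIoosub ⟨lt_of_lt_of_le hax0 h1, h2⟩
    have hZcont : ContinuousOn Z (Icc a x2) := by
      intro t ht
      rcases lt_or_eq_of_le ht.2 with hlt | heq2
      · exact (hpairD t (hIcos t ht.1 hlt) hlt).continuousAt.continuousWithinAt
      · subst heq2
        have h1 : ContinuousWithinAt Z (Iio x2) x2 := by
          show Tendsto Z (𝓝[<] x2) (𝓝 (Z x2))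
          rw [hZx2val]
          exact hZtend
        have h2 : ContinuousWithinAt Z (Iic x2) x2 := by
          rw [← Iic_diff_right] at h1
          exact continuousWithinAt_diff_self.1 h1
        exact h2.mono Icc_subset_Iic_self
    have hZderiv_eq : ∀ᶠ t in 𝓝[<] x2, deriv Z t = (deriv z t, deriv (deriv z) t) := by
      filter_upwards [hIoomem, self_mem_nhdsWithin] with t ht htlt
      have h3 : F (Z t) = (deriv z t, deriv (deriv z) t) := by
        rw [hZval t htlt, hFdef]
        simp only
        rw [hode' t (hIoosub ht)]
      rw [(hpairD t (hIoosub ht) htlt).deriv, h3]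
    have hFLm : F (L, m) = (m, -2 * (1 + m ^ 2) / L) := rfl
    have hd2tend : Tendsto (fun t => deriv (deriv z) t) (𝓝[<] x2) (𝓝 (-2 * (1 + m ^ 2) / L)) := by
      have hcont2 : ContinuousAt (fun q : ℝ × ℝ => -2 * (1 + q.2 ^ 2) / q.1) (L, m) := by
        apply ContinuousAt.div
        · exact continuousAt_const.mul
            (continuousAt_const.add ((continuous_snd.continuousAt).pow 2))
        · exact continuous_fst.continuousAt
        · exact hLpos.ne'
      apply Tendsto.congr' ?_ (hcont2.tendsto.comp hZt)
      filter_upwards [hIoomem] with t ht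
      simp only [Function.comp_apply]
      exact (hode' t (hIoosub ht)).symm
    have hZx2D : HasDerivWithinAt Z (F (L, m)) (Iic x2) x2 := by
      apply hasDerivWithinAt_Iic_of_tendsto_deriv (s := Ioo a x2)
      · intro t ht
        exact (hpairD t (hIcos t ht.1.le ht.2) ht.2).differentiableAt.differentiableWithinAt
      · show Tendsto Z (𝓝[Ioo a x2] x2) (𝓝 (Z x2))
        rw [hZx2val]
        exact hZtend.mono_left (nhdsWithin_mono _ Ioo_subset_Iio_self)
      · exact Ioo_mem_nhdsLT_of_mem ⟨halt, le_rfl⟩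
      · rw [hFLm]
        exact Tendsto.congr' (hZderiv_eq.mono fun t h => h.symm) (hmt.prodMk_nhds hd2tend)
    have hgU : ∀ t ∈ Ioc a x2, g t ∈ U := by
      intro t ht
      rcases lt_or_eq_of_le ht.2 with hlt | heqq
      · exact ((haprop t ht.1 hlt).1).2
      · rw [heqq, hgp]; exact hLmU
    have hZU : ∀ t ∈ Ioc a x2, Z t ∈ U := by
      intro t ht
      rcases lt_or_eq_of_le ht.2 with hlt | heqq
      · rw [hZval t hlt]; exact ((haprop t ht.1 hlt).1).1
      · rw [heqq, hZx2val]; exact hLmU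
    have hgderiv : ∀ t ∈ Ioc a x2, HasDerivWithinAt g (F (g t)) (Iic t) t := by
      intro t ht
      have h9 : t ∈ Ioo (x2 - ε₀) (x2 + ε₀) := ⟨by linarith [ht.1], by linarith [ht.2, hε₀]⟩
      exact (hgode t h9).hasDerivWithinAt
    have hZderivW : ∀ t ∈ Ioc a x2, HasDerivWithinAt Z (F (Z t)) (Iic t) t := by
      intro t ht
      rcases lt_or_eq_of_le ht.2 with hlt | heqq
      · exact (hpairD t (hIcos t ht.1.le hlt) hlt).hasDerivWithinAt
      · subst heqq
        rw [hZx2val]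
        exact hZx2D
    have hgcontOn : ContinuousOn g (Icc a x2) := by
      intro t ht
      have h9 : t ∈ Ioo (x2 - ε₀) (x2 + ε₀) := ⟨by linarith [ht.1, haε₀], by linarith [ht.2, hε₀]⟩
      exact ((hgode t h9).continuousAt).continuousWithinAt
    have hEqOn : EqOn Z g (Icc a x2) :=
      ODE_solution_unique_of_mem_Icc_left (v := fun _ => F) (s := fun _ => U)
        (fun _ _ => hlip) hZcont hZderivW hZU hgcontOn hgderiv hgU (by rw [hZx2val, hgp])
    -- build the extended solution
    set w : ℝ → ℝ := fun x => if x < x2 then z x else (g x).1 with hwdef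
    have hwz : EqOn w z s := by
      intro x hx
      have h9 : x < x2 := (hseq ▸ hx).2
      simp only [hwdef]
      rw [if_pos h9]
    have hg1d : ∀ y ∈ Ioo (x2 - ε₀) (x2 + ε₀), HasDerivAt (fun x => (g x).1) ((g y).2) y := by
      intro y hy
      have h1 := (ContinuousLinearMap.fst ℝ ℝ ℝ).hasFDerivAt.comp_hasDerivAt y (hgode y hy)
      simp at h1
      exact h1
    have hg2d : ∀ y ∈ Ioo (x2 - ε₀) (x2 + ε₀),
        HasDerivAt (fun x => (g x).2) (-2 * (1 + (g y).2 ^ 2) / (g y).1) y := by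
      intro y hy
      have h1 := (ContinuousLinearMap.snd ℝ ℝ ℝ).hasFDerivAt.comp_hasDerivAt y (hgode y hy)
      simp at h1
      exact h1
    set V : Set ℝ := Ioo a (x2 + ε) with hVdef
    have hVsub : V ⊆ Ioo (x2 - ε₀) (x2 + ε₀) := fun y hy =>
      ⟨by have := hy.1; linarith, by have := hy.2; linarith⟩
    have hwgV : EqOn w (fun x => (g x).1) V := by
      intro x hx
      by_cases hlt : x < x2
      · have h1 : Z x = g x := hEqOn ⟨hx.1.le, hlt.le⟩
        rw [hZval x hlt] at h1
        have h2 : z x = (g x).1 := congrArg Prod.fst h1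
        simp only [hwdef]
        rw [if_pos hlt]
        exact h2
      · simp only [hwdef]
        rw [if_neg hlt]
    have hwder : ∀ x ∈ V, deriv w x = (g x).2 := by
      intro x hx
      have heqw : w =ᶠ[𝓝 x] fun u => (g u).1 := by
        filter_upwards [Ioo_mem_nhds hx.1 hx.2] with u hu
        exact hwgV hu
      rw [heqw.deriv_eq]
      exact (hg1d x (hVsub hx)).deriv
    set t' : Set ℝ := Ioo x1 (x2 + ε) with ht'def
    have hsol : IsSolOn t' w := by
      have main : ∀ y ∈ t', 0 < w y ∧ DifferentiableAt ℝ w y ∧ DifferentiableAt ℝ (deriv w) y ∧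
          deriv (deriv w) y / (1 + (deriv w y) ^ 2) = -2 / w y := by
        intro y hy
        rcases lt_or_ge y x2 with hylt | hyge
        · have hys : y ∈ s := hseq ▸ ⟨hy.1, hylt⟩
          have hwz_ev : w =ᶠ[𝓝 y] z := by
            filter_upwards [Iio_mem_nhds hylt] with u hu
            simp only [hwdef]
            exact if_pos (mem_Iio.1 hu)
          have hder_ev : deriv w =ᶠ[𝓝 y] deriv z := hwz_ev.deriv
          refine ⟨?_, ?_, ?_, ?_⟩
          · rw [hwz hys]; exact hpos y hys
          · exact (hwz_ev.differentiableAt_iff).2 (hd1 y hys)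
          · exact (hder_ev.differentiableAt_iff).2 (hd2 y hys)
          · rw [hder_ev.deriv_eq, hder_ev.self_of_nhds, hwz_ev.self_of_nhds]
            exact hode y hys
        · have hyV : y ∈ V := ⟨lt_of_lt_of_le halt hyge, hy.2⟩
          have hyball : y ∈ Ioo (x2 - ε) (x2 + ε) := ⟨by linarith, hy.2⟩
          have hwg_ev : w =ᶠ[𝓝 y] fun u => (g u).1 := by
            filter_upwards [Ioo_mem_nhds hyV.1 hyV.2] with u hu
            exact hwgV hu
          have hder_ev : deriv w =ᶠ[𝓝 y] fun u => (g u).2 := by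
            filter_upwards [Ioo_mem_nhds hyV.1 hyV.2] with u hu
            exact hwder u hu
          have hp : 0 < (g y).1 := hgpos y hyball
          refine ⟨?_, ?_, ?_, ?_⟩
          · rw [hwgV hyV]; exact hp
          · exact (hwg_ev.differentiableAt_iff).2 (hg1d y (hVsub hyV)).differentiableAt
          · exact (hder_ev.differentiableAt_iff).2 (hg2d y (hVsub hyV)).differentiableAt
          · rw [hder_ev.deriv_eq, (hg2d y (hVsub hyV)).deriv, hwder y hyV, hwgV hyV]
            have hq : (0:ℝ) < 1 + (g y).2 ^ 2 := by positivity
            field_simp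
      exact ⟨isOpen_Ioo, ordConnected_Ioo, fun y hy => (main y hy).1, fun y hy => (main y hy).2.1,
        fun y hy => (main y hy).2.2.1, fun y hy => (main y hy).2.2.2⟩
    have hsub : s ⊆ t' := by
      rw [hseq]
      exact Ioo_subset_Ioo le_rfl (by linarith)
    have heqt : t' = s := hmaxsol t' w hsol hsub hwz
    have hx2t' : x2 ∈ t' := ⟨hx1x2, by linarith⟩
    rw [heqt] at hx2t'
    exact hnotmem hx2t'
  have hz2 : Tendsto z (𝓝[<] x2) (𝓝 0) := hL0' ▸ hLtend
  -- blow-up of the slope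
  have habs : Tendsto (fun x => |deriv z x|) (𝓝[<] x2) atTop := by
    have hIoomem : Ioo x0 x2 ∈ 𝓝[<] x2 := Ioo_mem_nhdsLT_of_mem ⟨hx0mem.2, le_rfl⟩
    have hsqrtTop : Tendsto Real.sqrt atTop atTop := by
      apply tendsto_atTop_atTop.2
      intro b
      refine ⟨b ^ 2, fun a ha => ?_⟩
      calc b ≤ |b| := le_abs_self b
      _ = Real.sqrt (b ^ 2) := (Real.sqrt_sq_eq_abs b).symm
      _ ≤ Real.sqrt a := Real.sqrt_le_sqrt ha
    have h4 : Tendsto (fun x => (z x) ^ 4) (𝓝[<] x2) (𝓝[>] 0) := by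
      rw [tendsto_nhdsWithin_iff]
      constructor
      · have := ((continuous_pow 4).tendsto (0:ℝ)).comp hz2
        simp at this
        exact this
      · filter_upwards [hIoomem] with x hx
        exact pow_pos (hpos x (hIoosub hx)) 4
    have h5 : Tendsto (fun x => z0 ^ 4 / (z x) ^ 4) (𝓝[<] x2) atTop := by
      have h5a := tendsto_inv_nhdsGT_zero.comp h4
      have h6 := h5a.const_mul_atTop (show (0:ℝ) < z0 ^ 4 by positivity)
      apply h6.congr
      intro x
      simp only [Function.comp_apply]
      rw [div_eq_mul_inv]
    have h7 : Tendsto (fun x => z0 ^ 4 / (z x) ^ 4 - 1) (𝓝[<] x2) atTop :=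
      (tendsto_atTop_add_const_right _ (-1) h5).congr (fun x => by ring)
    have h8 := hsqrtTop.comp h7
    apply Tendsto.congr' ?_ h8
    filter_upwards [hIoomem] with x hx
    simp only [Function.comp_apply]
    rw [← hsq x (hIoosub hx), Real.sqrt_sq_eq_abs]
  exact ⟨x1, x2, hx1x2, hseq, hz2, habs⟩

/-- A maximal solution attaining an interior maximum lives on a bounded interval, tends to `0`
at both endpoints, and its slope blows up at both endpoints. -/
theorem stmt5 (s : Set ℝ) (z : ℝ → ℝ) (hz : IsMaxSolOn s z)
    (z0 x0 : ℝ) (hx0 : x0 ∈ s) (hval : z x0 = z0) (hmax : ∀ x ∈ s, z x ≤ z0) :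
    ∃ x1 x2 : ℝ, x1 < x2 ∧ s = Ioo x1 x2 ∧
      Tendsto z (nhdsWithin x1 (Ioi x1)) (nhds 0) ∧
      Tendsto z (nhdsWithin x2 (Iio x2)) (nhds 0) ∧
      Tendsto (fun x => |deriv z x|) (nhdsWithin x1 (Ioi x1)) atTop ∧
      Tendsto (fun x => |deriv z x|) (nhdsWithin x2 (Iio x2)) atTop := by
  obtain ⟨x1, x2, h12, hseq, hz2, habs2⟩ := SolAux.main_right hz hx0 hval hmax
  have hzneg := SolAux.maxSolOn_neg hz
  have hx0n : -x0 ∈ Neg.neg ⁻¹' s := by simpa using hx0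
  have hvaln : (z ∘ Neg.neg) (-x0) = z0 := by simpa using hval
  have hmaxn : ∀ x ∈ Neg.neg ⁻¹' s, (z ∘ Neg.neg) x ≤ z0 := fun x hx => hmax _ hx
  obtain ⟨a, b, hab, hseqn, hzn, habsn⟩ := SolAux.main_right hzneg hx0n hvaln hmaxn
  have hnegseq : (Neg.neg ⁻¹' s : Set ℝ) = Ioo (-x2) (-x1) := by
    rw [hseq]; ext y
    simp only [mem_preimage, mem_Ioo]
    constructor
    · rintro ⟨h1, h2⟩; constructor <;> linarith
    · rintro ⟨h1, h2⟩; constructor <;> linarith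
  have hIooeq : Ioo a b = Ioo (-x2) (-x1) := hseqn.symm.trans hnegseq
  have hb : b = -x1 := by
    have h1 : sSup (Ioo a b) = sSup (Ioo (-x2) (-x1)) := by rw [hIooeq]
    rwa [csSup_Ioo hab, csSup_Ioo (by linarith : -x2 < -x1)] at h1
  have hnegt : Tendsto (fun x : ℝ => -x) (𝓝[>] x1) (𝓝[<] (-x1)) := by
    apply ContinuousWithinAt.tendsto_nhdsWithin (continuous_neg.continuousAt.continuousWithinAt)
    intro x hx
    exact neg_lt_neg (show x1 < x from hx)
  have hz1 : Tendsto z (𝓝[>] x1) (𝓝 0) := by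
    have h2 := (hb ▸ hzn).comp hnegt
    apply h2.congr
    intro x
    simp
  have hder : ∀ x ∈ s, deriv (z ∘ Neg.neg) (-x) = -(deriv z x) := by
    intro x hx
    have hd1 := hz.1.2.2.2.1
    have h1 : HasDerivAt (z ∘ Neg.neg) (-(deriv z x)) (-x) := by
      have hd : HasDerivAt z (deriv z x) (- -x) := by
        rw [neg_neg]; exact (hd1 x hx).hasDerivAt
      have h2 := hd.comp (-x) (hasDerivAt_neg (-x))
      simpa using h2
    exact h1.deriv
  have habs1 : Tendsto (fun x => |deriv z x|) (𝓝[>] x1) atTop := by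
    have h2 := (hb ▸ habsn).comp hnegt
    apply Tendsto.congr' ?_ h2
    have hsm : Ioo x1 x2 ∈ 𝓝[>] x1 := Ioo_mem_nhdsGT_of_mem ⟨le_rfl, h12⟩
    filter_upwards [hsm] with x hx
    have hxs : x ∈ s := hseq ▸ hx
    simp only [Function.comp_apply]
    rw [hder x hxs, abs_neg]
  exact ⟨x1, x2, h12, hseq, hz1, hz2, habs1, habs2⟩
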